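/- Let T₁, T₂ be functional one-way transducers (each realizing a partial function from Σ* to Γ*) with T₁ ⊆ T₂ (classical containment of the realized relations). Define R as the product transducer over Σ ⊎ Γ whose states are pairs (q₁,q₂), initial state the pair of initial states, final states F₁ × F₂, with transitions (s₁,s₂) →(a·w₂ | a·w₁) (t₁,t₂) whenever s₁ →(a|w₁) t₁ in T₁ and s₂ →(a|w₂) t₂ in T₂. Then R is a resynchronizer: every pair of synchronized words (w, w') related by R satisfies π_Σ(w) = π_Σ(w') and π_Γ(w) = π_Γ(w'). -/
import Mathlib


/-- A one-way transducer with input alphabet `Sig`, output alphabet `Gam`, states `Q`. -/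
structure OWT (Sig Gam Q : Type) where
  init : Q
  final : Set Q
  trans : Q → Sig → List Gam → Q → Prop

/-- Runs of a one-way transducer, recording consumed input and produced output. -/
inductive OWT.Run {Sig Gam Q : Type} (T : OWT Sig Gam Q) :
    Q → List Sig → List Gam → Q → Prop
  | nil (q : Q) : T.Run q [] [] q
  | cons {p q r : Q} {a : Sig} {w : List Gam} {u : List Sig} {v : List Gam} :
      T.trans p a w q → T.Run q u v r → T.Run p (a :: u) (w ++ v) r

/-- The relation realized by a one-way transducer. -/
def OWT.Realizes {Sig Gam Q : Type} (T : OWT Sig Gam Q) (u : List Sig) (v : List Gam) : Prop :=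
  ∃ qf ∈ T.final, T.Run T.init u v qf

/-- Runs of the product resynchronizer of `T₁` and `T₂`: on a transition of `T₁`
`s₁ →(a|w₁) t₁` and of `T₂` `s₂ →(a|w₂) t₂`, it consumes the synchronized block `a·w₂`
and produces the synchronized block `a·w₁` (words over `Sig ⊕ Gam`). -/
inductive ProdRun {Sig Gam Q₁ Q₂ : Type} (T₁ : OWT Sig Gam Q₁) (T₂ : OWT Sig Gam Q₂) :
    (Q₁ × Q₂) → List (Sig ⊕ Gam) → List (Sig ⊕ Gam) → (Q₁ × Q₂) → Prop
  | nil (q : Q₁ × Q₂) : ProdRun T₁ T₂ q [] [] q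
  | cons {s₁ t₁ : Q₁} {s₂ t₂ : Q₂} {r : Q₁ × Q₂} {a : Sig} {w₁ w₂ : List Gam}
      {w w' : List (Sig ⊕ Gam)} :
      T₁.trans s₁ a w₁ t₁ → T₂.trans s₂ a w₂ t₂ →
      ProdRun T₁ T₂ (t₁, t₂) w w' r →
      ProdRun T₁ T₂ (s₁, s₂) (Sum.inl a :: w₂.map Sum.inr ++ w)
        (Sum.inl a :: w₁.map Sum.inr ++ w') r

def piSigma {Sig Gam : Type} (w : List (Sig ⊕ Gam)) : List Sig := w.filterMap Sum.getLeft?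
def piGamma {Sig Gam : Type} (w : List (Sig ⊕ Gam)) : List Gam := w.filterMap Sum.getRight?

lemma piSigma_block {Sig Gam : Type} (a : Sig) (v : List Gam) (w : List (Sig ⊕ Gam)) :
    piSigma (Sum.inl a :: v.map Sum.inr ++ w) = a :: piSigma w := by
  simp [piSigma, List.filterMap_append, List.filterMap_map, Function.comp]

lemma piGamma_block {Sig Gam : Type} (a : Sig) (v : List Gam) (w : List (Sig ⊕ Gam)) :
    piGamma (Sum.inl a :: v.map Sum.inr ++ w) = v ++ piGamma w := by
  simp only [piGamma, List.cons_append, List.filterMap_cons, Sum.getRight?,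
    List.filterMap_append, List.filterMap_map]
  congr 1
  induction v with
  | nil => rfl
  | cons x xs ih => simp [List.filterMap_cons, Sum.getRight?, Function.comp, ih]

lemma prodRun_decomp {Sig Gam Q₁ Q₂ : Type} (T₁ : OWT Sig Gam Q₁) (T₂ : OWT Sig Gam Q₂)
    {p : Q₁ × Q₂} {w w' : List (Sig ⊕ Gam)} {r : Q₁ × Q₂}
    (h : ProdRun T₁ T₂ p w w' r) :
    ∃ u v₁ v₂, T₁.Run p.1 u v₁ r.1 ∧ T₂.Run p.2 u v₂ r.2 ∧
      piSigma w = u ∧ piGamma w = v₂ ∧ piSigma w' = u ∧ piGamma w' = v₁ := by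
  induction h with
  | nil q => exact ⟨[], [], [], OWT.Run.nil _, OWT.Run.nil _, by simp [piSigma],
      by simp [piGamma], by simp [piSigma], by simp [piGamma]⟩
  | cons h₁ h₂ _ ih =>
    obtain ⟨u, v₁, v₂, r₁, r₂, e₁, e₂, e₃, e₄⟩ := ih
    exact ⟨_, _, _, OWT.Run.cons h₁ r₁, OWT.Run.cons h₂ r₂,
      by rw [piSigma_block, e₁], by rw [piGamma_block, e₂],
      by rw [piSigma_block, e₃], by rw [piGamma_block, e₄]⟩

/-- The product of two functional one-way transducers with `T₁ ⊆ T₂` is a resynchronizer: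
every pair of synchronized words related by a successful product run has equal `Sig`- and
`Gam`-projections. -/
theorem prod_is_resynchronizer {Sig Gam Q₁ Q₂ : Type}
    (T₁ : OWT Sig Gam Q₁) (T₂ : OWT Sig Gam Q₂)
    (hfun₁ : ∀ u v v', T₁.Realizes u v → T₁.Realizes u v' → v = v')
    (hfun₂ : ∀ u v v', T₂.Realizes u v → T₂.Realizes u v' → v = v')
    (hcont : ∀ u v, T₁.Realizes u v → T₂.Realizes u v)
    (w w' : List (Sig ⊕ Gam)) (qf : Q₁ × Q₂)
    (hrun : ProdRun T₁ T₂ (T₁.init, T₂.init) w w' qf)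
    (hfin : qf.1 ∈ T₁.final ∧ qf.2 ∈ T₂.final) :
    piSigma w = piSigma w' ∧ piGamma w = piGamma w' := by
  obtain ⟨u, v₁, v₂, r₁, r₂, e₁, e₂, e₃, e₄⟩ := prodRun_decomp T₁ T₂ hrun
  have h1 : T₁.Realizes u v₁ := ⟨qf.1, hfin.1, r₁⟩
  have h2 : T₂.Realizes u v₂ := ⟨qf.2, hfin.2, r₂⟩
  have : v₁ = v₂ := hfun₂ u v₁ v₂ (hcont u v₁ h1) h2
  exact ⟨e₁.trans e₃.symm, e₂.trans (this ▸ e₄.symm)⟩
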